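/- The permutation (1 2)(4 5) cannot be written as a product of fewer than 6 factors from the set {(1 2 3), (1 2 3)⁻¹, (3 4 5), (3 4 5)⁻¹}, and it has word length exactly 6 with respect to this set. -/

import Mathlib

private def gg : Fin 4 → Equiv.Perm (Fin 5)
  | 0 => c[(0 : Fin 5), 1, 2]
  | 1 => c[(0 : Fin 5), 1, 2]⁻¹
  | 2 => c[(2 : Fin 5), 3, 4]
  | 3 => c[(2 : Fin 5), 3, 4]⁻¹

private def reach : ℕ → Finset (Equiv.Perm (Fin 5))
  | 0 => {1}
  | n + 1 => reach n ∪ ((Finset.univ : Finset (Fin 4)).biUnion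
      fun i => (reach n).image fun p => gg i * p)

private lemma prod_mem_reach :
    ∀ (n : ℕ) (l : List (Equiv.Perm (Fin 5))),
      (∀ x ∈ l, ∃ i, x = gg i) → l.length ≤ n → l.prod ∈ reach n := by
  intro n
  induction n with
  | zero =>
    intro l _ hlen
    rw [List.length_eq_zero_iff.mp (Nat.le_zero.mp hlen)]
    simp [reach]
  | succ n ih =>
    intro l hmem hlen
    cases l with
    | nil =>
      have : (List.nil : List (Equiv.Perm (Fin 5))).prod ∈ reach n :=
        ih [] (by simp) (by simp)
      simp only [reach, Finset.mem_union]
      exact Or.inl this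
    | cons x xs =>
      obtain ⟨i, hi⟩ := hmem x List.mem_cons_self
      have hxs : xs.prod ∈ reach n :=
        ih xs (fun y hy => hmem y (List.mem_cons_of_mem _ hy))
          (Nat.succ_le_succ_iff.mp (by simpa using hlen))
      simp only [reach, Finset.mem_union, Finset.mem_biUnion, Finset.mem_image]
      exact Or.inr ⟨i, Finset.mem_univ i, xs.prod, hxs, by rw [hi, List.prod_cons]⟩

set_option maxRecDepth 100000 in
set_option maxHeartbeats 4000000 in
private lemma target_not_reach :
    c[(0 : Fin 5), 1] * c[(3 : Fin 5), 4] ∉ reach 5 := by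
  decide

/-- (1 2)(4 5) is not a product of fewer than 6 factors from
{(1 2 3)^{±1}, (3 4 5)^{±1}}, but is a product of exactly 6 such factors
(0-based labels). -/
theorem stmt_7 :
    (¬ ∃ l : List (Equiv.Perm (Fin 5)),
        l.length < 6 ∧
        (∀ x ∈ l, x ∈ ({c[(0 : Fin 5), 1, 2], c[(0 : Fin 5), 1, 2]⁻¹,
          c[(2 : Fin 5), 3, 4], c[(2 : Fin 5), 3, 4]⁻¹} :
            Set (Equiv.Perm (Fin 5)))) ∧
        l.prod = c[(0 : Fin 5), 1] * c[(3 : Fin 5), 4]) ∧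
    (∃ l : List (Equiv.Perm (Fin 5)),
        l.length = 6 ∧
        (∀ x ∈ l, x ∈ ({c[(0 : Fin 5), 1, 2], c[(0 : Fin 5), 1, 2]⁻¹,
          c[(2 : Fin 5), 3, 4], c[(2 : Fin 5), 3, 4]⁻¹} :
            Set (Equiv.Perm (Fin 5)))) ∧
        l.prod = c[(0 : Fin 5), 1] * c[(3 : Fin 5), 4]) := by
  constructor
  · rintro ⟨l, hlen, hmem, hprod⟩
    have hmem' : ∀ x ∈ l, ∃ i, x = gg i := by
      intro x hx
      have h := hmem x hx
      simp only [Set.mem_insert_iff, Set.mem_singleton_iff] at h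
      rcases h with h | h | h | h
      exacts [⟨0, h⟩, ⟨1, h⟩, ⟨2, h⟩, ⟨3, h⟩]
    exact target_not_reach (hprod ▸ prod_mem_reach 5 l hmem' (Nat.lt_succ_iff.mp hlen))
  · refine ⟨[gg 0, gg 2, gg 1, gg 3, gg 0, gg 2], rfl, ?_, ?_⟩
    · intro x hx
      simp only [List.mem_cons, List.not_mem_nil, or_false] at hx
      rcases hx with h | h | h | h | h | h <;> subst h <;> simp [gg, Set.mem_insert_iff]
    · decide
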